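/- Let M = (m_{ij}) be an n×n complex matrix of rank r, and let f(z, w) = Σ_{(k,ℓ)∈S} a_{k,ℓ} z^k w^ℓ be a polynomial over ℂ indexed by a finite set S of pairs of nonnegative integers. Define f[M] to be the matrix with (i,j) entry f(m_{ij}, conj(m_{ij})). Then rank(f[M]) ≤ Σ_{(k,ℓ)∈S} C(r+k−1, k) · C(r+ℓ−1, ℓ). -/

import Mathlib

open Matrix

lemma exists_factor {n : ℕ} (M : Matrix (Fin n) (Fin n) ℂ) :
    ∃ (A : Matrix (Fin n) (Fin M.rank) ℂ) (B : Matrix (Fin M.rank) (Fin n) ℂ),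
      ∀ i j, M i j = ∑ t, A i t * B t j := by
  classical
  set W := LinearMap.range M.mulVecLin with hWdef
  have hW : Module.finrank ℂ W = M.rank := rfl
  let b : Module.Basis (Fin M.rank) ℂ W := Module.finBasisOfFinrankEq ℂ W hW
  have hcol : ∀ j, (fun i => M i j) ∈ W := by
    intro j
    refine ⟨Pi.single j 1, ?_⟩
    ext i
    simp [Matrix.mulVecLin_apply, Matrix.mulVec_single]
  refine ⟨Matrix.of fun i t => (b t : Fin n → ℂ) i,
    Matrix.of fun t j => b.repr ⟨fun i => M i j, hcol j⟩ t, ?_⟩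
  intro i j
  have h := b.sum_repr ⟨fun i => M i j, hcol j⟩
  have h2 := congrArg (fun w : W => (w : Fin n → ℂ) i) h
  simp only [Submodule.coe_sum, Submodule.coe_smul, Finset.sum_apply, Pi.smul_apply,
    smul_eq_mul] at h2
  rw [← h2]
  simp [mul_comm]

lemma pow_expand {r k : ℕ} (x : Fin r → ℂ) :
    (∑ t, x t) ^ k = ∑ s : Sym (Fin r) k, (Multiset.countPerms s.1 : ℂ) * (s.1.map x).prod := by
  rw [show (∑ t, x t) = Finset.univ.sum x from rfl, Finset.sum_pow, Finset.sym_univ]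

/-- Entrywise polynomial application and rank: if `M` is an `n × n` complex matrix of rank `r`
and `f(z,w) = Σ_{(k,ℓ)∈S} a_{k,ℓ} z^k w^ℓ`, then the matrix `f[M]` with entries
`f(m_{ij}, conj m_{ij})` has rank at most `Σ_{(k,ℓ)∈S} C(r+k−1,k)·C(r+ℓ−1,ℓ)`. -/
theorem stmt_6 (n : ℕ) (M : Matrix (Fin n) (Fin n) ℂ) (S : Finset (ℕ × ℕ)) (a : ℕ × ℕ → ℂ) :
    Matrix.rank (Matrix.of fun i j =>
        ∑ p ∈ S, a p * (M i j) ^ p.1 * (starRingEnd ℂ (M i j)) ^ p.2)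
      ≤ ∑ p ∈ S, (M.rank + p.1 - 1).choose p.1 * (M.rank + p.2 - 1).choose p.2 := by
  classical
  obtain ⟨A, B, hAB⟩ := exists_factor M
  let r := M.rank
  let ι := Σ p : {p : ℕ × ℕ // p ∈ S}, Sym (Fin r) p.1.1 × Sym (Fin r) p.1.2
  let U : Matrix (Fin n) ι ℂ := Matrix.of fun i q =>
    a q.1.1 * (Multiset.countPerms q.2.1.1 : ℂ) * (Multiset.countPerms q.2.2.1 : ℂ) *
      (q.2.1.1.map fun t => A i t).prod * (q.2.2.1.map fun t => starRingEnd ℂ (A i t)).prod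
  let V : Matrix ι (Fin n) ℂ := Matrix.of fun q j =>
    (q.2.1.1.map fun t => B t j).prod * (q.2.2.1.map fun t => starRingEnd ℂ (B t j)).prod
  have heq : (Matrix.of fun i j =>
      ∑ p ∈ S, a p * (M i j) ^ p.1 * (starRingEnd ℂ (M i j)) ^ p.2) = U * V := by
    ext i j
    rw [Matrix.mul_apply, Matrix.of_apply, ← Finset.univ_sigma_univ, Finset.sum_sigma,
      ← Finset.sum_coe_sort S]
    refine Finset.sum_congr rfl fun p _ => ?_
    rw [Fintype.sum_prod_type]
    have hM : M i j = ∑ t, A i t * B t j := hAB i j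
    have hMc : starRingEnd ℂ (M i j)
        = ∑ t, starRingEnd ℂ (A i t) * starRingEnd ℂ (B t j) := by
      rw [hM, map_sum]; simp
    rw [hMc, hM, pow_expand, pow_expand]
    simp only [Finset.mul_sum, Finset.sum_mul]
    rw [Finset.sum_comm]
    refine Finset.sum_congr rfl fun s₁ _ => Finset.sum_congr rfl fun s₂ _ => ?_
    simp only [U, V, Matrix.of_apply, Multiset.prod_map_mul]
    ring
  rw [heq]
  calc (U * V).rank ≤ U.rank := Matrix.rank_mul_le_left U V
    _ ≤ Fintype.card ι := U.rank_le_card_width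
    _ = ∑ p ∈ S, (r + p.1 - 1).choose p.1 * (r + p.2 - 1).choose p.2 := by
        rw [Fintype.card_sigma, ← Finset.sum_coe_sort S]
        refine Finset.sum_congr rfl fun p _ => ?_
        simp [Sym.card_sym_eq_choose, Fintype.card_fin]
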